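/- For N odd and any even integer t, the involution X ↦ X Δ [1,N−1] of E_N maps E_N^{t,−} bijectively onto E_N^{−t−2,−}, where E_N^{t,−} = {X ∈ E_N : N ∈ X and γ(X) = t}. -/

import Mathlib

open scoped symmDiff

/-- γ(X) = |{i ∈ X : i even}| − |{i ∈ X : i odd}|, as an integer. -/
def gam (X : Finset ℕ) : ℤ :=
  ((X.filter (fun i => Even i)).card : ℤ) - ((X.filter (fun i => Odd i)).card : ℤ)

open Finset

lemma filt_symmDiff (p : ℕ → Prop) [DecidablePred p] (A B : Finset ℕ) :
    (A ∆ B).filter p = (A.filter p) ∆ (B.filter p) := by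
  ext x; simp [Finset.mem_symmDiff, Finset.mem_filter]; tauto

lemma card_symmDiff' (A B : Finset ℕ) :
    ((A ∆ B).card : ℤ) = A.card + B.card - 2 * (A ∩ B).card := by
  have h1 : (A ∆ B) = (A \ B) ∪ (B \ A) := by
    ext x; simp [Finset.mem_symmDiff]
  have hd : Disjoint (A \ B) (B \ A) := by
    simp [Finset.disjoint_left]; tauto
  have hA : (A \ B).card + (A ∩ B).card = A.card := by
    rw [Finset.card_sdiff_add_card_inter]
  have hB : (B \ A).card + (A ∩ B).card = B.card := by
    rw [Finset.inter_comm, Finset.card_sdiff_add_card_inter]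
  rw [h1, Finset.card_union_of_disjoint hd]
  push_cast [← hA, ← hB]
  ring

lemma gam_symmDiff (A B : Finset ℕ) :
    gam (A ∆ B) = gam A + gam B - 2 * gam (A ∩ B) := by
  unfold gam
  rw [filt_symmDiff, filt_symmDiff, card_symmDiff', card_symmDiff',
    Finset.filter_inter_distrib, Finset.filter_inter_distrib]
  ring

lemma gam_insert (a : ℕ) (s : Finset ℕ) (h : a ∉ s) :
    gam (insert a s) = gam s + (if Even a then 1 else -1) := by
  unfold gam
  by_cases ha : Even a
  · rw [Finset.filter_insert, Finset.filter_insert, if_pos ha,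
      if_neg (by simp [Nat.not_odd_iff_even, ha]),
      Finset.card_insert_of_notMem (by simp [h])]
    push_cast; simp [ha]; ring
  · rw [Finset.filter_insert, Finset.filter_insert, if_neg ha,
      if_pos (Nat.not_even_iff_odd.mp ha),
      Finset.card_insert_of_notMem (by simp [h])]
    push_cast; simp [ha]; ring

lemma gam_Icc_even (m : ℕ) : gam (Finset.Icc 1 (2 * m)) = 0 := by
  induction m with
  | zero => simp [gam]
  | succ k ih =>
    have h1 : 2 * (k + 1) = (2 * k + 1) + 1 := by ring
    have e1 : Finset.Icc 1 (2 * (k + 1)) =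
        insert (2 * k + 2) (insert (2 * k + 1) (Finset.Icc 1 (2 * k))) := by
      rw [h1, ← Finset.insert_Icc_right_eq_Icc_add_one (by omega), ← Finset.insert_Icc_right_eq_Icc_add_one (by omega)]; rfl
    rw [e1, gam_insert _ _ (by simp only [Finset.mem_insert, Finset.mem_Icc]; omega), gam_insert _ _ (by simp only [Finset.mem_Icc]; omega), ih]
    have : Even (2 * k + 2) := by exact ⟨k + 1, by ring⟩
    have h2 : ¬ Even (2 * k + 1) := by simp [Nat.even_add_one]
    simp [this, h2]

lemma step (N : ℕ) (hN : Odd N) (h3 : 3 ≤ N) (X : Finset ℕ)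
    (hsub : X ⊆ Finset.Icc 1 N) (hcard : Even X.card) (hmem : N ∈ X) :
    (X ∆ Finset.Icc 1 (N - 1)) ⊆ Finset.Icc 1 N ∧
      Even (X ∆ Finset.Icc 1 (N - 1)).card ∧
      N ∈ X ∆ Finset.Icc 1 (N - 1) ∧
      gam (X ∆ Finset.Icc 1 (N - 1)) = -gam X - 2 := by
  set I := Finset.Icc 1 (N - 1) with hI
  have hNI : N ∉ I := by simp [hI, Finset.mem_Icc]; omega
  have hinter : X ∩ I = X.erase N := by
    ext x
    simp only [Finset.mem_inter, Finset.mem_erase, hI, Finset.mem_Icc]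
    constructor
    · rintro ⟨hx, h1, h2⟩; exact ⟨by omega, hx⟩
    · rintro ⟨hne, hx⟩
      have := Finset.mem_Icc.mp (hsub hx)
      exact ⟨hx, by omega, by omega⟩
  have herase : gam X = gam (X.erase N) - 1 := by
    have h' := gam_insert N (X.erase N) (Finset.notMem_erase _ _)
    rw [if_neg (by simpa using Nat.not_even_iff_odd.mpr hN),
      Finset.insert_erase hmem] at h'
    linarith
  obtain ⟨m, hm⟩ := hN
  have hN1 : N - 1 = 2 * m := by omega
  have hgamI : gam I = 0 := by rw [hI, hN1]; exact gam_Icc_even m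
  have hcardI : I.card = 2 * m := by rw [hI, hN1, Nat.card_Icc]; omega
  refine ⟨?_, ?_, ?_, ?_⟩
  · intro x hx
    rw [Finset.mem_symmDiff] at hx
    rcases hx with ⟨hx, -⟩ | ⟨hx, -⟩
    · exact hsub hx
    · rw [hI, Finset.mem_Icc] at hx; rw [Finset.mem_Icc]; omega
  · have hc := card_symmDiff' X I
    rw [← Int.even_coe_nat, hc, hcardI]
    obtain ⟨c, hc'⟩ := hcard
    exact ⟨c + m - (X ∩ I).card, by push_cast [hc']; ring⟩
  · rw [Finset.mem_symmDiff]; exact Or.inl ⟨hmem, hNI⟩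
  · rw [gam_symmDiff, hgamI, hinter, herase]; ring

/-- For even t, X ↦ X ∆ [1,N−1] maps E_N^{t,−} bijectively onto E_N^{−t−2,−}. -/
theorem stmt6 (N : ℕ) (hN : Odd N) (h3 : 3 ≤ N) (t : ℤ) (ht : Even t) :
    Set.BijOn (fun X => X ∆ Finset.Icc 1 (N - 1))
      {X : Finset ℕ | X ⊆ Finset.Icc 1 N ∧ Even X.card ∧ N ∈ X ∧ gam X = t}
      {X : Finset ℕ | X ⊆ Finset.Icc 1 N ∧ Even X.card ∧ N ∈ X ∧ gam X = -t - 2} := by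
  have hmt : Set.MapsTo (fun X => X ∆ Finset.Icc 1 (N - 1))
      {X : Finset ℕ | X ⊆ Finset.Icc 1 N ∧ Even X.card ∧ N ∈ X ∧ gam X = t}
      {X : Finset ℕ | X ⊆ Finset.Icc 1 N ∧ Even X.card ∧ N ∈ X ∧ gam X = -t - 2} := by
    rintro X ⟨h1, h2, h3', h4⟩
    obtain ⟨a, b, c, d⟩ := step N hN h3 X h1 h2 h3'
    exact ⟨a, b, c, by rw [d, h4]⟩
  have hmt' : Set.MapsTo (fun X => X ∆ Finset.Icc 1 (N - 1))
      {X : Finset ℕ | X ⊆ Finset.Icc 1 N ∧ Even X.card ∧ N ∈ X ∧ gam X = -t - 2}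
      {X : Finset ℕ | X ⊆ Finset.Icc 1 N ∧ Even X.card ∧ N ∈ X ∧ gam X = t} := by
    rintro X ⟨h1, h2, h3', h4⟩
    obtain ⟨a, b, c, d⟩ := step N hN h3 X h1 h2 h3'
    exact ⟨a, b, c, by rw [d, h4]; ring⟩
  have hinv : ∀ X : Finset ℕ, (X ∆ Finset.Icc 1 (N - 1)) ∆ Finset.Icc 1 (N - 1) = X :=
    fun X => symmDiff_symmDiff_cancel_right (Finset.Icc 1 (N - 1)) X
  exact Set.InvOn.bijOn ⟨fun X _ => hinv X, fun X _ => hinv X⟩ hmt hmt'
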